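/- arXiv:2205.07598 — 3 statements merged into one kernel-verified Lean document; each statement's English description precedes it below -/
import Mathlib

section
/- Let a ∈ ℝ^M have nonnegative entries, let c ∈ ℝ^{M×K} have nonnegative entries, and let d ≥ 0, σ² > 0. Then the function g : ℝ^{MK}_{≥0} × ℝ^{K−1}_{≥0} → ℝ given by g(x, y) = (Σ_m a_m x_{m,k})² / (Σ_{i≠k} y_i² + Σ_{m,i} c_{m,i} x_{m,i}² + d + σ²) is quasiconcave on the nonnegative orthant: its superlevel sets {(x,y) : g(x,y) ≥ t} are convex for every t ≥ 0. -/
open Finset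

-- Minkowski for sums of squares
lemma sqrt_sum_sq_combo {ι : Type*} [Fintype ι] (f g : ι → ℝ) (θ θ' : ℝ)
    (hθ : 0 ≤ θ) (hθ' : 0 ≤ θ') :
    Real.sqrt (∑ i, (θ * f i + θ' * g i)^2)
      ≤ θ * Real.sqrt (∑ i, (f i)^2) + θ' * Real.sqrt (∑ i, (g i)^2) := by
  have key : ∀ h : ι → ℝ, ‖(EuclideanSpace.equiv ι ℝ).symm h‖ = Real.sqrt (∑ i, (h i)^2) := by
    intro h
    rw [EuclideanSpace.norm_eq]
    congr 1
    refine Finset.sum_congr rfl fun i _ => ?_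
    simp [sq_abs]
  have h1 : ((EuclideanSpace.equiv ι ℝ).symm fun i => θ * f i + θ' * g i)
      = θ • (EuclideanSpace.equiv ι ℝ).symm f + θ' • (EuclideanSpace.equiv ι ℝ).symm g := by
    apply PiLp.ext
    intro i
    simp [PiLp.add_apply, PiLp.smul_apply]
  calc Real.sqrt (∑ i, (θ * f i + θ' * g i)^2)
      = ‖θ • (EuclideanSpace.equiv ι ℝ).symm f + θ' • (EuclideanSpace.equiv ι ℝ).symm g‖ := by
        rw [← h1, key]
    _ ≤ ‖θ • (EuclideanSpace.equiv ι ℝ).symm f‖ + ‖θ' • (EuclideanSpace.equiv ι ℝ).symm g‖ :=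
        norm_add_le _ _
    _ = θ * Real.sqrt (∑ i, (f i)^2) + θ' * Real.sqrt (∑ i, (g i)^2) := by
        rw [norm_smul, norm_smul, key, key, Real.norm_eq_abs, Real.norm_eq_abs,
          abs_of_nonneg hθ, abs_of_nonneg hθ']

/-- Quasiconcavity of the MRT SINR objective: the superlevel sets of
g(x,y) = (Σ_m a_m x_{m,k})² / (Σ_{i≠k} y_i² + Σ_{m,i} c_{m,i} x_{m,i}² + d + σ²)
within the nonnegative orthant are convex for every t ≥ 0. -/
theorem stmt_8 {M K : ℕ} (k : Fin K) (a : Fin M → ℝ) (c : Fin M → Fin K → ℝ)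
    (d σ2 : ℝ) (ha : ∀ m, 0 ≤ a m) (hc : ∀ m i, 0 ≤ c m i)
    (hd : 0 ≤ d) (hσ : 0 < σ2) :
    ∀ t : ℝ, 0 ≤ t →
      Convex ℝ {p : (Fin M → Fin K → ℝ) × (Fin K → ℝ) |
        (∀ m i, 0 ≤ p.1 m i) ∧ (∀ i, 0 ≤ p.2 i) ∧
        t ≤ (∑ m, a m * p.1 m k)^2 /
          ((∑ i ∈ univ.erase k, (p.2 i)^2) + (∑ m, ∑ i, c m i * (p.1 m i)^2) + d + σ2)} := by
  intro t ht
  -- denominator as function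
  set ι := (Fin K) ⊕ ((Fin M × Fin K) ⊕ Unit) with hι
  have hds : 0 ≤ d + σ2 := by linarith
  -- the affine vector whose squared norm is the denominator
  let V : (Fin M → Fin K → ℝ) × (Fin K → ℝ) → ι → ℝ := fun p i =>
    Sum.elim (fun j => if j = k then 0 else p.2 j)
      (Sum.elim (fun mj => Real.sqrt (c mj.1 mj.2) * p.1 mj.1 mj.2)
        (fun _ => Real.sqrt (d + σ2))) i
  have hV : ∀ p, ∑ i, (V p i)^2 =
      (∑ i ∈ univ.erase k, (p.2 i)^2) + (∑ m, ∑ i, c m i * (p.1 m i)^2) + d + σ2 := by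
    intro p
    rw [Fintype.sum_sum_type, Fintype.sum_sum_type]
    simp only [V, Sum.elim_inl, Sum.elim_inr]
    have e1 : ∑ j : Fin K, (if j = k then (0:ℝ) else p.2 j)^2
        = ∑ i ∈ univ.erase k, (p.2 i)^2 := by
      rw [← Finset.sum_erase univ
        (f := fun j => (if j = k then (0:ℝ) else p.2 j)^2) (a := k) (by simp)]
      refine Finset.sum_congr rfl fun j hj => ?_
      rw [if_neg (Finset.ne_of_mem_erase hj)]
    have e2 : ∑ mj : Fin M × Fin K, (Real.sqrt (c mj.1 mj.2) * p.1 mj.1 mj.2)^2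
        = ∑ m, ∑ i, c m i * (p.1 m i)^2 := by
      rw [Fintype.sum_prod_type]
      refine Finset.sum_congr rfl fun m _ => Finset.sum_congr rfl fun i _ => ?_
      rw [mul_pow, Real.sq_sqrt (hc m i)]
    have e3 : ∑ _u : Unit, (Real.sqrt (d + σ2))^2 = d + σ2 := by
      simp [Real.sq_sqrt hds]
    rw [e1, e2, e3]; ring
  have hDpos : ∀ p : (Fin M → Fin K → ℝ) × (Fin K → ℝ),
      0 < (∑ i ∈ univ.erase k, (p.2 i)^2) + (∑ m, ∑ i, c m i * (p.1 m i)^2) + d + σ2 := by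
    intro p
    have h1 : 0 ≤ ∑ i ∈ univ.erase k, (p.2 i)^2 :=
      Finset.sum_nonneg fun i _ => sq_nonneg _
    have h2 : 0 ≤ ∑ m, ∑ i, c m i * (p.1 m i)^2 :=
      Finset.sum_nonneg fun m _ => Finset.sum_nonneg fun i _ =>
        mul_nonneg (hc m i) (sq_nonneg _)
    linarith
  -- key reformulation: membership ⟺ SOC constraint
  have hsoc : ∀ p : (Fin M → Fin K → ℝ) × (Fin K → ℝ), (∀ m i, 0 ≤ p.1 m i) →
      (t ≤ (∑ m, a m * p.1 m k)^2 /
        ((∑ i ∈ univ.erase k, (p.2 i)^2) + (∑ m, ∑ i, c m i * (p.1 m i)^2) + d + σ2)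
        ↔ Real.sqrt t * Real.sqrt (∑ i, (V p i)^2) ≤ ∑ m, a m * p.1 m k) := by
    intro p hp
    have hD := hDpos p
    have hN : 0 ≤ ∑ m, a m * p.1 m k :=
      Finset.sum_nonneg fun m _ => mul_nonneg (ha m) (hp m k)
    rw [le_div_iff₀ hD, hV p, ← Real.sqrt_mul ht,
      ← Real.sqrt_le_sqrt_iff (sq_nonneg (∑ m, a m * p.1 m k)), Real.sqrt_sq hN]
  rintro ⟨x, y⟩ ⟨hx, hy, hxy⟩ ⟨x', y'⟩ ⟨hx', hy', hxy'⟩ θ θ' hθ hθ' hθθ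
  have hz1 : ∀ m i, 0 ≤ (θ • (x, y) + θ' • (x', y')).1 m i := fun m i => by
    simp only [Prod.fst_add, Prod.smul_fst, Pi.add_apply, Pi.smul_apply, smul_eq_mul]
    exact add_nonneg (mul_nonneg hθ (hx m i)) (mul_nonneg hθ' (hx' m i))
  have hz2 : ∀ i, 0 ≤ (θ • (x, y) + θ' • (x', y')).2 i := fun i => by
    simp only [Prod.snd_add, Prod.smul_snd, Pi.add_apply, Pi.smul_apply, smul_eq_mul]
    exact add_nonneg (mul_nonneg hθ (hy i)) (mul_nonneg hθ' (hy' i))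
  refine ⟨hz1, hz2, ?_⟩
  rw [hsoc _ hz1]
  have hVz : ∀ i, V (θ • (x, y) + θ' • (x', y')) i = θ * V (x, y) i + θ' * V (x', y') i := by
    rintro (j | mj | u) <;>
      simp only [V, Sum.elim_inl, Sum.elim_inr, Prod.fst_add, Prod.snd_add, Prod.smul_fst,
        Prod.smul_snd, Pi.add_apply, Pi.smul_apply, smul_eq_mul]
    · split <;> ring
    · ring
    · nlinarith [Real.sqrt_nonneg (d + σ2)]
  have hmink : Real.sqrt (∑ i, (V (θ • (x, y) + θ' • (x', y')) i)^2)
      ≤ θ * Real.sqrt (∑ i, (V (x, y) i)^2) + θ' * Real.sqrt (∑ i, (V (x', y') i)^2) := by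
    calc Real.sqrt (∑ i, (V (θ • (x, y) + θ' • (x', y')) i)^2)
        = Real.sqrt (∑ i, (θ * V (x, y) i + θ' * V (x', y') i)^2) := by
          congr 1; exact Finset.sum_congr rfl fun i _ => by rw [hVz i]
      _ ≤ _ := sqrt_sum_sq_combo _ _ _ _ hθ hθ'
  have h1 := (hsoc _ hx).mp hxy
  have h2 := (hsoc _ hx').mp hxy'
  have hst : 0 ≤ Real.sqrt t := Real.sqrt_nonneg t
  have hNz : (∑ m, a m * (θ • (x, y) + θ' • (x', y')).1 m k)
      = θ * (∑ m, a m * x m k) + θ' * (∑ m, a m * x' m k) := by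
    rw [Finset.mul_sum, Finset.mul_sum, ← Finset.sum_add_distrib]
    refine Finset.sum_congr rfl fun m _ => ?_
    simp only [Prod.fst_add, Prod.smul_fst, Pi.add_apply, Pi.smul_apply, smul_eq_mul]
    ring
  rw [hNz]
  calc Real.sqrt t * Real.sqrt (∑ i, (V (θ • (x, y) + θ' • (x', y')) i)^2)
      ≤ Real.sqrt t * (θ * Real.sqrt (∑ i, (V (x, y) i)^2)
          + θ' * Real.sqrt (∑ i, (V (x', y') i)^2)) := by
        exact mul_le_mul_of_nonneg_left hmink hst
    _ = θ * (Real.sqrt t * Real.sqrt (∑ i, (V (x, y) i)^2))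
          + θ' * (Real.sqrt t * Real.sqrt (∑ i, (V (x', y') i)^2)) := by ring
    _ ≤ θ * (∑ m, a m * x m k) + θ' * (∑ m, a m * x' m k) :=
        add_le_add (mul_le_mul_of_nonneg_left h1 hθ) (mul_le_mul_of_nonneg_left h2 hθ')
end

section
/- Fix t > 0 and for each k ∈ {1,…,K} suppose SINR_k(p) = n_k p_k / (Σ_i B_{k,i} p_i + d_k) where n_k > 0, B_{k,i} ≥ 0 with B_{k,k} = 0 is not required (B_{k,k} ≥ 0 allowed provided n_k > t·B_{k,k} at solvability), and d_k > 0. If p, p' ∈ ℝ^K with p' having positive entries, SINR_k(p) = t for all k, and SINR_k(p') ≥ t for all k, then p_k ≤ p'_k for all k, and p_k ≥ 0 for all k. -/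
open Finset

/-- Lemma 2: the exact solution of the SINR equations is componentwise minimal
among all feasible power vectors achieving SINR at least t, and is nonnegative. -/
theorem stmt_12 {K : ℕ} (t : ℝ) (ht : 0 < t)
    (n : Fin K → ℝ) (B : Fin K → Fin K → ℝ) (d : Fin K → ℝ)
    (hn : ∀ k, 0 < n k) (hB : ∀ k i, 0 ≤ B k i) (hd : ∀ k, 0 < d k)
    (hnB : ∀ k, t * B k k < n k)
    (p p' : Fin K → ℝ) (hp' : ∀ k, 0 < p' k)
    (hSINRp : ∀ k, n k * p k / ((∑ i, B k i * p i) + d k) = t)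
    (hSINRp' : ∀ k, t ≤ n k * p' k / ((∑ i, B k i * p' i) + d k)) :
    ∀ k, 0 ≤ p k ∧ p k ≤ p' k := by
  have hD' : ∀ k, 0 < (∑ i, B k i * p' i) + d k := fun k =>
    add_pos_of_nonneg_of_pos
      (Finset.sum_nonneg fun i _ => mul_nonneg (hB k i) (hp' i).le) (hd k)
  have hEq : ∀ k, n k * p k = t * ((∑ i, B k i * p i) + d k) := by
    intro k
    have h := hSINRp k
    rcases eq_or_ne ((∑ i, B k i * p i) + d k) 0 with h0 | h0
    · rw [h0, div_zero] at h; exact absurd h.symm (ne_of_gt ht)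
    · rw [div_eq_iff h0] at h; linarith
  have hGe : ∀ k, t * ((∑ i, B k i * p' i) + d k) ≤ n k * p' k := fun k => by
    have := (le_div_iff₀ (hD' k)).mp (hSINRp' k); linarith
  intro k0
  -- upper bound
  obtain ⟨k, -, hk⟩ := Finset.exists_max_image Finset.univ (fun k => p k / p' k)
    ⟨k0, Finset.mem_univ k0⟩
  set c := p k / p' k with hc
  have hle : ∀ i, p i ≤ c * p' i := fun i =>
    (div_le_iff₀ (hp' i)).mp (hk i (Finset.mem_univ i))
  have hck : p k = c * p' k := (div_mul_cancel₀ (p k) (hp' k).ne').symm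
  have hsum : ∀ j, (∑ i, B j i * p i) ≤ c * (∑ i, B j i * p' i) := by
    intro j
    rw [Finset.mul_sum]
    refine Finset.sum_le_sum fun i _ => ?_
    calc B j i * p i ≤ B j i * (c * p' i) :=
          mul_le_mul_of_nonneg_left (hle i) (hB j i)
      _ = c * (B j i * p' i) := by ring
  have hc1 : c ≤ 1 := by
    by_contra hcgt
    push_neg at hcgt
    have h1 := hEq k
    have h2 := hGe k
    have h3 := hsum k
    have h4 := hd k
    have hfin : n k * p k < c * (n k * p' k) := by
      calc n k * p k = t * ((∑ i, B k i * p i) + d k) := h1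
        _ ≤ t * (c * (∑ i, B k i * p' i) + d k) :=
            mul_le_mul_of_nonneg_left (by linarith) ht.le
        _ < t * (c * (∑ i, B k i * p' i) + c * d k) := by
            apply mul_lt_mul_of_pos_left _ ht
            nlinarith
        _ = c * (t * ((∑ i, B k i * p' i) + d k)) := by ring
        _ ≤ c * (n k * p' k) := mul_le_mul_of_nonneg_left h2 (by linarith)
    have heq2 : n k * p k = c * (n k * p' k) := by rw [hck]; ring
    linarith
  -- lower bound
  obtain ⟨m, -, hm⟩ := Finset.exists_min_image Finset.univ (fun k => p k / p' k)
    ⟨k0, Finset.mem_univ k0⟩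
  set e := p m / p' m with he
  have hge : ∀ i, e * p' i ≤ p i := fun i =>
    (le_div_iff₀ (hp' i)).mp (hm i (Finset.mem_univ i))
  have hcm : p m = e * p' m := (div_mul_cancel₀ (p m) (hp' m).ne').symm
  have hsum' : ∀ j, e * (∑ i, B j i * p' i) ≤ (∑ i, B j i * p i) := by
    intro j
    rw [Finset.mul_sum]
    refine Finset.sum_le_sum fun i _ => ?_
    calc e * (B j i * p' i) = B j i * (e * p' i) := by ring
      _ ≤ B j i * p i := mul_le_mul_of_nonneg_left (hge i) (hB j i)
  have he0 : 0 ≤ e := by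
    by_contra heg
    push_neg at heg
    have h1 := hEq m
    have h2 := hGe m
    have h3 := hsum' m
    have h4 := hd m
    have hfin : e * (n m * p' m) < n m * p m := by
      calc e * (n m * p' m) ≤ e * (t * ((∑ i, B m i * p' i) + d m)) :=
            mul_le_mul_of_nonpos_left h2 heg.le
        _ = t * (e * (∑ i, B m i * p' i) + e * d m) := by ring
        _ < t * (e * (∑ i, B m i * p' i) + d m) := by
            apply mul_lt_mul_of_pos_left _ ht
            nlinarith
        _ ≤ t * ((∑ i, B m i * p i) + d m) :=
            mul_le_mul_of_nonneg_left (by linarith) ht.le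
        _ = n m * p m := h1.symm
    have heq2 : n m * p m = e * (n m * p' m) := by rw [hcm]; ring
    linarith
  constructor
  · have := hge k0
    nlinarith [mul_le_mul_of_nonneg_right he0 (hp' k0).le]
  · have := hle k0
    nlinarith [mul_le_mul_of_nonneg_right hc1 (hp' k0).le]
end

section
/- Under the setting of the previous lemma (SINR_k(p) = n_k p_k/(Σ_i B_{k,i} p_i + d_k), coefficients nonnegative, d_k > 0, n_k > 0): the feasibility system {p ≥ 0, SINR_k(p) ≥ t for all k, P_m(p) ≤ P_d for all m, C_m(p) ≤ C_d for all m}, where each P_m is a nonnegative linear functional of p plus a constant and each C_m(p) = log det(I + (1/σ_m²) F_m diag(p) F_m^H), is feasible if and only if the unique solution p* of the linear system SINR_k(p) = t for all k (assuming it exists and is unique) satisfies p* ≥ 0, P_m(p*) ≤ P_d, and C_m(p*) ≤ C_d for all m. -/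
open Matrix Finset ComplexOrder

lemma aux_det_one_add {N : Type*} [Fintype N] [DecidableEq N] {M : Matrix N N ℂ}
    (hM : M.PosSemidef) : ∃ r : ℝ, 1 ≤ r ∧ (1 + M).det = (r : ℂ) := by
  have hH := hM.isHermitian
  refine ⟨∏ i, (1 + hH.eigenvalues i), ?_, ?_⟩
  · have h := Finset.prod_le_prod (s := Finset.univ) (f := fun _ : N => (1:ℝ))
      (g := fun i => 1 + hH.eigenvalues i) (fun i _ => by norm_num)
      (fun i _ => by linarith [hM.eigenvalues_nonneg i])
    simpa using h
  have hU : (hH.eigenvectorUnitary : Matrix N N ℂ) * star (hH.eigenvectorUnitary : Matrix N N ℂ) = 1 :=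
    (Matrix.mem_unitaryGroup_iff).mp hH.eigenvectorUnitary.2
  have h1 : (1 : Matrix N N ℂ) + M
      = (hH.eigenvectorUnitary : Matrix N N ℂ)
        * (1 + diagonal (RCLike.ofReal ∘ hH.eigenvalues))
        * (star (hH.eigenvectorUnitary : Matrix N N ℂ)) := by
    conv_lhs => rw [hH.spectral_theorem, Unitary.conjStarAlgAut_apply]
    rw [mul_add, mul_one, add_mul, hU]
  rw [h1, det_mul_right_comm, hU, one_mul]
  have h2 : (1 : Matrix N N ℂ) + diagonal (RCLike.ofReal ∘ hH.eigenvalues)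
      = diagonal (fun i => (1 : ℂ) + (hH.eigenvalues i : ℂ)) := by
    rw [← diagonal_one, diagonal_add]
    rfl
  rw [h2, det_diagonal]
  push_cast
  rfl

open scoped MatrixOrder in
lemma aux_det_le {N : Type*} [Fintype N] [DecidableEq N] {A B : Matrix N N ℂ}
    (hA : A.PosDef) (hB : B.PosSemidef) : A.det.re ≤ ((A + B).det).re := by
  set S := CFC.sqrt A with hSdef
  have hS : S.PosSemidef := (CFC.sqrt_nonneg A).posSemidef
  have hSS : S * S = A := CFC.sqrt_mul_sqrt_self A hA.posSemidef.nonneg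
  have hdetA : 0 < A.det := hA.det_pos
  have hdS : IsUnit S.det := by
    have hm : S.det * S.det = A.det := by rw [← det_mul, hSS]
    exact isUnit_of_mul_isUnit_left (hm ▸ hdetA.ne'.isUnit)
  have hSinv : S * S⁻¹ = 1 := mul_nonsing_inv S hdS
  have hSinv' : S⁻¹ * S = 1 := nonsing_inv_mul S hdS
  have hherm : (S⁻¹)ᴴ = S⁻¹ := by rw [conjTranspose_nonsing_inv, hS.isHermitian.eq]
  have hMps : (S⁻¹ * B * S⁻¹).PosSemidef := by
    have := hB.conjTranspose_mul_mul_same (B := S⁻¹)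
    rwa [hherm] at this
  obtain ⟨r, hr1, hrdet⟩ := aux_det_one_add hMps
  have hdecomp : A + B = S * (1 + S⁻¹ * B * S⁻¹) * S := by
    rw [mul_add, mul_one, add_mul, hSS]
    congr 1
    calc B = (S * S⁻¹) * B * (S⁻¹ * S) := by rw [hSinv, hSinv', one_mul, mul_one]
      _ = S * (S⁻¹ * B * S⁻¹) * S := by simp only [Matrix.mul_assoc]
  have hdet : (A + B).det = A.det * (r : ℂ) := by
    rw [hdecomp, det_mul_right_comm, hSS, det_mul, hrdet]
  have him : A.det.im = 0 := by
    have := hdetA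
    rw [Complex.lt_def] at this
    simpa using this.2.symm
  have hre : 0 < A.det.re := by
    have := hdetA
    rw [Complex.lt_def] at this
    simpa using this.1
  rw [hdet]
  simp [Complex.mul_re, him]
  nlinarith


lemma aux_psd {R K : ℕ} (F : Matrix (Fin R) (Fin K) ℂ) (c : ℝ) (hc : 0 ≤ c)
    (q : Fin K → ℝ) (hq : ∀ k, 0 ≤ q k) :
    ((c : ℂ) • (F * Matrix.diagonal (fun k => (q k : ℂ)) * Fᴴ)).PosSemidef := by
  have h1 : (c : ℂ) • (F * Matrix.diagonal (fun k => (q k : ℂ)) * Fᴴ)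
      = F * Matrix.diagonal (fun k => ((c * q k : ℝ) : ℂ)) * Fᴴ := by
    have h0 : ∀ d : Fin K → ℂ, (F * Matrix.diagonal d * Fᴴ)
        = Matrix.of (fun i j => ∑ k, F i k * d k * star (F j k)) := by
      intro d
      ext i j
      rw [Matrix.mul_apply]
      refine Finset.sum_congr rfl fun k _ => ?_
      rw [Matrix.mul_diagonal, Matrix.conjTranspose_apply]
    rw [h0, h0]
    ext i j
    simp only [Matrix.smul_apply, Matrix.of_apply, Finset.mul_sum, smul_eq_mul]
    refine Finset.sum_congr rfl fun k _ => ?_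
    push_cast
    ring
  rw [h1]
  exact (Matrix.PosSemidef.diagonal fun k =>
    Complex.zero_le_real.mpr (mul_nonneg hc (hq k))).mul_mul_conjTranspose_same F

lemma aux_posdef {R K : ℕ} (F : Matrix (Fin R) (Fin K) ℂ) (c : ℝ) (hc : 0 ≤ c)
    (q : Fin K → ℝ) (hq : ∀ k, 0 ≤ q k) :
    ((1 : Matrix (Fin R) (Fin R) ℂ)
      + (c : ℂ) • (F * Matrix.diagonal (fun k => (q k : ℂ)) * Fᴴ)).PosDef :=
  Matrix.PosDef.add_posSemidef Matrix.PosDef.one (aux_psd F c hc q hq)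

lemma aux_detre_pos {N : Type*} [Fintype N] [DecidableEq N] {A : Matrix N N ℂ}
    (hA : A.PosDef) : 0 < A.det.re := by
  have := hA.det_pos
  rw [Complex.lt_def] at this
  simpa using this.1

lemma aux_C {R K : ℕ} (F : Matrix (Fin R) (Fin K) ℂ) (c : ℝ) (hc : 0 ≤ c)
    (q p : Fin K → ℝ) (hq : ∀ k, 0 ≤ q k) (hqp : ∀ k, q k ≤ p k) :
    Real.log (((1 : Matrix (Fin R) (Fin R) ℂ)
        + (c : ℂ) • (F * Matrix.diagonal (fun k => (q k : ℂ)) * Fᴴ)).det.re)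
      ≤ Real.log (((1 : Matrix (Fin R) (Fin R) ℂ)
        + (c : ℂ) • (F * Matrix.diagonal (fun k => (p k : ℂ)) * Fᴴ)).det.re) := by
  have hdec : (1 : Matrix (Fin R) (Fin R) ℂ)
        + (c : ℂ) • (F * Matrix.diagonal (fun k => (p k : ℂ)) * Fᴴ)
      = ((1 : Matrix (Fin R) (Fin R) ℂ)
        + (c : ℂ) • (F * Matrix.diagonal (fun k => (q k : ℂ)) * Fᴴ))
        + (c : ℂ) • (F * Matrix.diagonal (fun k => ((p k - q k : ℝ) : ℂ)) * Fᴴ) := by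
    have hdiag : Matrix.diagonal (fun k => (p k : ℂ))
        = Matrix.diagonal (fun k => (q k : ℂ))
          + Matrix.diagonal (fun k => ((p k - q k : ℝ) : ℂ)) := by
      rw [diagonal_add]
      congr 1
      funext k
      push_cast
      ring
    rw [add_assoc, ← smul_add, hdiag]
    congr 2
    rw [Matrix.mul_add, Matrix.add_mul]
  rw [hdec]
  have hpd := aux_posdef F c hc q hq
  have hpsd := aux_psd F c hc (fun k => p k - q k) (fun k => by linarith [hqp k])
  exact Real.log_le_log (aux_detre_pos hpd) (aux_det_le hpd hpsd)

lemma aux_key {K : ℕ} (t : ℝ) (ht : 0 < t) (n : Fin K → ℝ) (B : Fin K → Fin K → ℝ)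
    (d : Fin K → ℝ) (hB : ∀ k i, 0 ≤ B k i) (hd : ∀ k, 0 < d k)
    (p : Fin K → ℝ) (hp : ∀ k, 0 < p k)
    (hpge : ∀ k, t * ((∑ i, B k i * p i) + d k) ≤ n k * p k)
    (x g : Fin K → ℝ) (hg : ∀ k, 0 ≤ g k)
    (hx : ∀ k, (∑ i, t * (B k i * x i)) + g k ≤ n k * x k) :
    ∀ k, 0 ≤ x k := by
  by_contra hcon
  push_neg at hcon
  obtain ⟨k1, hk1⟩ := hcon
  obtain ⟨k0, -, hk0⟩ := Finset.exists_min_image Finset.univ (fun k => x k / p k)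
    ⟨k1, Finset.mem_univ k1⟩
  obtain ⟨s, hs⟩ : ∃ s : ℝ, s = x k0 / p k0 := ⟨_, rfl⟩
  have hsneg : s < 0 := by
    rw [hs]
    exact lt_of_le_of_lt (hk0 k1 (Finset.mem_univ k1)) (div_neg_of_neg_of_pos hk1 (hp k1))
  have hxk0 : x k0 = s * p k0 := by
    rw [hs, div_mul_cancel₀ _ (hp k0).ne']
  have hlb : ∀ i, s * p i ≤ x i := by
    intro i
    have h1 : s ≤ x i / p i := hs ▸ hk0 i (Finset.mem_univ i)
    have h2 : s * p i ≤ (x i / p i) * p i :=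
      mul_le_mul_of_nonneg_right h1 (hp i).le
    rwa [div_mul_cancel₀ _ (hp i).ne'] at h2
  have h1 : ∑ i, t * (B k0 i * (s * p i)) ≤ ∑ i, t * (B k0 i * x i) :=
    Finset.sum_le_sum fun i _ =>
      mul_le_mul_of_nonneg_left (mul_le_mul_of_nonneg_left (hlb i) (hB k0 i)) ht.le
  have h2 : ∑ i, t * (B k0 i * (s * p i)) = s * (t * ∑ i, B k0 i * p i) := by
    rw [Finset.mul_sum, Finset.mul_sum]
    exact Finset.sum_congr rfl fun i _ => by ring
  have h3 := hpge k0
  have h4 := hx k0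
  have h5 := hg k0
  have h6 := hd k0
  have h7 := hp k0
  have hA : s * (t * ∑ i, B k0 i * p i) + g k0 ≤ n k0 * (s * p k0) := by
    rw [← h2, ← hxk0]
    exact le_trans (add_le_add_left h1 _) h4
  have hBd : s * (n k0 * p k0) ≤ s * (t * ((∑ i, B k0 i * p i) + d k0)) :=
    mul_le_mul_of_nonpos_left h3 hsneg.le
  nlinarith [hA, hBd, mul_neg_of_neg_of_pos hsneg (mul_pos ht h6)]

/-- Lemma 3: the feasibility system of (P8) is feasible iff the unique solution
of the SINR equations satisfies all the constraints. -/

theorem stmt_13 {K R M : ℕ} (t : ℝ) (ht : 0 < t)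
    (n : Fin K → ℝ) (B : Fin K → Fin K → ℝ) (d : Fin K → ℝ)
    (hn : ∀ k, 0 < n k) (hB : ∀ k i, 0 ≤ B k i) (hd : ∀ k, 0 < d k)
    (hnB : ∀ k, t * B k k < n k)
    (e : Fin M → Fin K → ℝ) (f : Fin M → ℝ) (he : ∀ m k, 0 ≤ e m k)
    (Pd Cd : ℝ) (F : Fin M → Matrix (Fin R) (Fin K) ℂ) (σ : Fin M → ℝ)
    (hσ : ∀ m, 0 < σ m)
    (SINR : Fin K → (Fin K → ℝ) → ℝ)
    (hSINR : ∀ k p, SINR k p = n k * p k / ((∑ i, B k i * p i) + d k))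
    (Pm : Fin M → (Fin K → ℝ) → ℝ)
    (hPm : ∀ m p, Pm m p = (∑ k, e m k * p k) + f m)
    (Cm : Fin M → (Fin K → ℝ) → ℝ)
    (hCm : ∀ m p, Cm m p =
      Real.log (((1 : Matrix (Fin R) (Fin R) ℂ) + (((σ m)^2 : ℂ))⁻¹ •
        (F m * Matrix.diagonal (fun k => (p k : ℂ)) * (F m)ᴴ)).det.re))
    (pstar : Fin K → ℝ)
    (hstar : ∀ k, SINR k pstar = t)
    (huniq : ∀ q : Fin K → ℝ, (∀ k, SINR k q = t) → q = pstar) :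
    (∃ p : Fin K → ℝ, (∀ k, 0 ≤ p k) ∧ (∀ k, t ≤ SINR k p) ∧
        (∀ m, Pm m p ≤ Pd) ∧ (∀ m, Cm m p ≤ Cd)) ↔
    ((∀ k, 0 ≤ pstar k) ∧ (∀ m, Pm m pstar ≤ Pd) ∧ (∀ m, Cm m pstar ≤ Cd)) := by
  constructor
  · rintro ⟨p, hp0, hge, hPmp, hCmp⟩
    have hsum : ∀ (x : Fin K → ℝ) (k : Fin K),
        t * ((∑ i, B k i * x i) + d k) = (∑ i, t * (B k i * x i)) + t * d k := by
      intro x k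
      rw [mul_add, Finset.mul_sum]
    have hden : ∀ k, 0 < (∑ i, B k i * p i) + d k := by
      intro k
      have : (0:ℝ) ≤ ∑ i, B k i * p i :=
        Finset.sum_nonneg fun i _ => mul_nonneg (hB k i) (hp0 i)
      linarith [hd k]
    have hpge : ∀ k, t * ((∑ i, B k i * p i) + d k) ≤ n k * p k := by
      intro k
      have h := hge k
      rw [hSINR k p, le_div_iff₀ (hden k)] at h
      linarith
    have hSnn : ∀ k, (0:ℝ) ≤ ∑ i, B k i * p i := fun k =>
      Finset.sum_nonneg fun i _ => mul_nonneg (hB k i) (hp0 i)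
    have hppos : ∀ k, 0 < p k := by
      intro k
      nlinarith [hpge k, hSnn k, hd k, ht, hn k, hp0 k]
    have hstar' : ∀ k, n k * pstar k = t * ((∑ i, B k i * pstar i) + d k) := by
      intro k
      have h := hstar k
      rw [hSINR k pstar] at h
      have hne : (∑ i, B k i * pstar i) + d k ≠ 0 := by
        intro h0
        rw [h0, div_zero] at h
        exact ht.ne h
      field_simp at h
      linarith [h]
    have hpstar0 : ∀ k, 0 ≤ pstar k := by
      refine aux_key t ht n B d hB hd p hppos hpge pstar (fun k => t * d k)
        (fun k => mul_nonneg ht.le (hd k).le) ?_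
      intro k
      rw [← hsum pstar k]
      exact (hstar' k).ge
    have hle : ∀ k, pstar k ≤ p k := by
      have h := aux_key t ht n B d hB hd p hppos hpge (fun k => p k - pstar k)
        (fun _ => 0) (fun _ => le_refl 0) ?_
      · intro k
        have := h k
        linarith
      · intro k
        have e1 : ∑ i, t * (B k i * (p i - pstar i))
            = (∑ i, t * (B k i * p i)) - ∑ i, t * (B k i * pstar i) := by
          rw [← Finset.sum_sub_distrib]
          exact Finset.sum_congr rfl fun i _ => by ring
        have e2 := hpge k
        rw [hsum p k] at e2
        have e3 := hstar' k
        rw [hsum pstar k] at e3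
        have e4 : n k * (p k - pstar k) = n k * p k - n k * pstar k := by ring
        rw [e1, e4]
        linarith
    refine ⟨hpstar0, ?_, ?_⟩
    · intro m
      have h := hPmp m
      rw [hPm] at h ⊢
      have : (∑ k, e m k * pstar k) ≤ ∑ k, e m k * p k :=
        Finset.sum_le_sum fun k _ => mul_le_mul_of_nonneg_left (hle k) (he m k)
      linarith
    · intro m
      have h := hCmp m
      rw [hCm] at h ⊢
      have hcast : (((σ m : ℂ))^2)⁻¹ = ((((σ m)^2)⁻¹ : ℝ) : ℂ) := by
        push_cast
        ring
      rw [hcast] at h ⊢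
      have hc : (0:ℝ) ≤ ((σ m)^2)⁻¹ := by positivity
      exact le_trans (aux_C (F m) _ hc pstar p hpstar0 hle) h
  · rintro ⟨h0, hP, hC⟩
    exact ⟨pstar, h0, fun k => (hstar k).ge, hP, hC⟩
end
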